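/- For every natural number n and every real θ > 0, ∫_0^∞ y^n e^{-y} / (y + θ) dy = n! · e^{θ} · E_{n+1}(θ). -/

import Mathlib

open MeasureTheory Real

/-- The generalized exponential integral `E_n(x) = ∫_1^∞ e^{-x t} / t^n dt`. -/
noncomputable def expInt (n : ℕ) (x : ℝ) : ℝ :=
  ∫ t in Set.Ioi (1 : ℝ), Real.exp (-x * t) / t ^ n

section Aux

open Set Filter

lemma expInt_integrand_integrable (n : ℕ) {x : ℝ} (hx : 0 < x) :
    IntegrableOn (fun t : ℝ => Real.exp (-x * t) / t ^ n) (Ioi 1) := by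
  refine (exp_neg_integrableOn_Ioi 1 hx).mono' ?_ ?_
  · refine (ContinuousOn.div (by fun_prop) (by fun_prop) fun t ht => ?_).aestronglyMeasurable
      measurableSet_Ioi
    exact pow_ne_zero _ (by linarith [mem_Ioi.mp ht] : (t:ℝ) ≠ 0)
  · filter_upwards [ae_restrict_mem measurableSet_Ioi] with t ht
    have h1 : (1:ℝ) ≤ t := le_of_lt ht
    have h0 : (0:ℝ) < t := lt_of_lt_of_le one_pos h1
    rw [Real.norm_eq_abs, abs_of_nonneg (by positivity)]
    exact div_le_self (le_of_lt (Real.exp_pos _)) (one_le_pow₀ h1)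

lemma gamma_integrand_integrable (n : ℕ) :
    IntegrableOn (fun y : ℝ => y ^ n * Real.exp (-y)) (Ioi 0) := by
  have h := Real.GammaIntegral_convergent (s := (n : ℝ) + 1) (by positivity)
  refine h.congr_fun ?_ measurableSet_Ioi
  intro y hy
  have hy0 : (0:ℝ) < y := hy
  simp only [add_sub_cancel_right, Real.rpow_natCast]
  ring

lemma I_integrable (n : ℕ) {θ : ℝ} (hθ : 0 < θ) :
    IntegrableOn (fun y : ℝ => y ^ n * Real.exp (-y) / (y + θ)) (Ioi 0) := by
  refine ((gamma_integrand_integrable n).mul_const θ⁻¹).mono' ?_ ?_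
  · refine (ContinuousOn.div (by fun_prop) (by fun_prop) fun y hy => ?_).aestronglyMeasurable
      measurableSet_Ioi
    have : (0:ℝ) < y := hy
    positivity
  · filter_upwards [ae_restrict_mem measurableSet_Ioi] with y hy
    have hy0 : (0:ℝ) < y := hy
    rw [Real.norm_eq_abs, abs_of_nonneg (by positivity), div_eq_mul_inv]
    have h1 : (y + θ)⁻¹ ≤ θ⁻¹ := by
      apply inv_anti₀ hθ
      linarith
    exact mul_le_mul_of_nonneg_left h1 (by positivity)

lemma gamma_integral_value (n : ℕ) :
    ∫ y in Ioi (0:ℝ), y ^ n * Real.exp (-y) = (Nat.factorial n : ℝ) := by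
  have h := Real.Gamma_eq_integral (s := (n : ℝ) + 1) (by positivity)
  rw [Real.Gamma_nat_eq_factorial] at h
  rw [h]
  refine setIntegral_congr_fun measurableSet_Ioi fun y hy => ?_
  have hy0 : (0:ℝ) < y := hy
  simp only [add_sub_cancel_right, Real.rpow_natCast]
  ring

lemma shift_integral (f : ℝ → ℝ) (a d : ℝ) :
    ∫ x in Ioi a, f (x + d) = ∫ x in Ioi (a + d), f x := by
  have A : MeasurePreserving (fun x : ℝ => x + d) volume volume :=
    measurePreserving_add_right volume d
  rw [← A.setIntegral_preimage_emb (measurableEmbedding_addRight d) f (Ioi (a + d))]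
  congr 1
  ext x
  simp

set_option maxHeartbeats 1000000 in
lemma expInt_rec {θ : ℝ} (hθ : 0 < θ) (k : ℕ) :
    ((k:ℝ) + 1) * expInt (k + 2) θ = Real.exp (-θ) - θ * expInt (k + 1) θ := by
  have hint1 := expInt_integrand_integrable (k + 1) hθ
  have hint2 := expInt_integrand_integrable (k + 2) hθ
  have hd : ∀ t ∈ Ici (1:ℝ), HasDerivAt (fun t => -Real.exp (-θ * t) / t ^ (k + 1))
      (θ * (Real.exp (-θ * t) / t ^ (k + 1)) + ((k:ℝ) + 1) * (Real.exp (-θ * t) / t ^ (k + 2))) t := by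
    intro t ht
    have ht0 : (0:ℝ) < t := lt_of_lt_of_le one_pos ht
    have h1 : HasDerivAt (fun t : ℝ => -Real.exp (-θ * t)) (θ * Real.exp (-θ * t)) t := by
      have := ((Real.hasDerivAt_exp (-θ * t)).comp t ((hasDerivAt_id t).const_mul (-θ))).neg
      refine this.congr_deriv ?_
      ring
    have h2 : HasDerivAt (fun t : ℝ => t ^ (k + 1)) (((k:ℝ) + 1) * t ^ k) t := by
      simpa using hasDerivAt_pow (k + 1) t
    have h3 := h1.div h2 (pow_ne_zero _ ht0.ne')
    refine h3.congr_deriv ?_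
    have htne : t ^ (k + 1) ≠ 0 := pow_ne_zero _ ht0.ne'
    field_simp
    ring
  have hf' : IntegrableOn (fun t : ℝ =>
      θ * (Real.exp (-θ * t) / t ^ (k + 1)) + ((k:ℝ) + 1) * (Real.exp (-θ * t) / t ^ (k + 2)))
      (Ioi 1) := (hint1.const_mul θ).add (hint2.const_mul _)
  have htend : Tendsto (fun t : ℝ => -Real.exp (-θ * t) / t ^ (k + 1)) atTop (nhds 0) := by
    have hmul : Tendsto (fun t : ℝ => θ * t) atTop atTop :=
      (tendsto_const_mul_atTop_of_pos hθ).mpr tendsto_id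
    have h1 : Tendsto (fun t : ℝ => Real.exp (-θ * t)) atTop (nhds 0) := by
      have := Real.tendsto_exp_neg_atTop_nhds_zero.comp hmul
      simpa only [Function.comp_def, neg_mul] using this
    have h2 : Tendsto (fun t : ℝ => (t ^ (k + 1))⁻¹) atTop (nhds 0) :=
      (tendsto_pow_atTop (Nat.succ_ne_zero k)).inv_tendsto_atTop
    have := (h1.mul h2).neg
    simpa [div_eq_mul_inv, neg_mul] using this
  have key := integral_Ioi_of_hasDerivAt_of_tendsto' hd hf' htend
  rw [integral_add (hint1.const_mul θ) (hint2.const_mul _), integral_const_mul,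
    integral_const_mul] at key
  simp only [one_pow, mul_one, div_one] at key
  have h4 : θ * expInt (k + 1) θ + ((k:ℝ) + 1) * expInt (k + 2) θ = Real.exp (-θ) := by
    unfold expInt
    rw [key]
    ring_nf
  linarith

lemma base_case {θ : ℝ} (hθ : 0 < θ) :
    ∫ y in Ioi (0:ℝ), Real.exp (-y) / (y + θ) = Real.exp θ * expInt 1 θ := by
  have step1 : expInt 1 θ = ∫ u in Ioi θ, Real.exp (-u) / u := by
    unfold expInt
    have h := integral_comp_mul_left_Ioi (fun u : ℝ => θ * (Real.exp (-u) / u)) 1 hθ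
    simp only [mul_one, smul_eq_mul] at h
    rw [show (∫ t in Ioi (1:ℝ), Real.exp (-θ * t) / t ^ 1) =
        ∫ t in Ioi (1:ℝ), θ * (Real.exp (-(θ * t)) / (θ * t)) from
      setIntegral_congr_fun measurableSet_Ioi fun t ht => by
        have ht0 : (0:ℝ) < t := lt_of_lt_of_le one_pos (le_of_lt ht)
        rw [pow_one, neg_mul]
        field_simp, h, integral_const_mul, ← mul_assoc, inv_mul_cancel₀ hθ.ne', one_mul]
  have step2 : (∫ u in Ioi θ, Real.exp (-u) / u) =
      ∫ y in Ioi (0:ℝ), Real.exp (-(y + θ)) / (y + θ) := by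
    rw [show Ioi θ = Ioi ((0:ℝ) + θ) by rw [zero_add]]
    exact (shift_integral (fun u => Real.exp (-u) / u) 0 θ).symm
  rw [step1, step2, ← MeasureTheory.integral_const_mul]
  refine setIntegral_congr_fun measurableSet_Ioi fun y hy => ?_
  have hy0 : (0:ℝ) < y := hy
  rw [mul_div_assoc', ← Real.exp_add]
  ring_nf

end Aux

/-- For every natural number `n` and every real `θ > 0`,
`∫_0^∞ yⁿ e^{-y} / (y + θ) dy = n! ⬝ e^{θ} ⬝ E_{n+1}(θ)`. -/
theorem integral_pow_mul_exp_div_add (n : ℕ) (θ : ℝ) (hθ : 0 < θ) :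
    ∫ y in Set.Ioi (0 : ℝ), y ^ n * Real.exp (-y) / (y + θ) =
      (Nat.factorial n : ℝ) * Real.exp θ * expInt (n + 1) θ := by
  induction n with
  | zero =>
    simp only [pow_zero, one_mul, Nat.factorial_zero, Nat.cast_one]
    exact base_case hθ
  | succ k ih =>
    have split : (∫ y in Set.Ioi (0:ℝ), y ^ (k + 1) * Real.exp (-y) / (y + θ)) =
        (∫ y in Set.Ioi (0:ℝ), y ^ k * Real.exp (-y)) -
          θ * ∫ y in Set.Ioi (0:ℝ), y ^ k * Real.exp (-y) / (y + θ) := by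
      rw [← MeasureTheory.integral_const_mul, ← integral_sub (gamma_integrand_integrable k)
        ((I_integrable k hθ).const_mul θ)]
      refine setIntegral_congr_fun measurableSet_Ioi fun y hy => ?_
      have hy0 : (0:ℝ) < y := hy
      have hyθ : y + θ ≠ 0 := by positivity
      field_simp
      ring
    rw [split, gamma_integral_value k, ih]
    have hrec := expInt_rec hθ k
    have hexp : Real.exp θ * Real.exp (-θ) = 1 := by
      rw [← Real.exp_add]; simp
    have h5 : ((k + 1).factorial : ℝ) * Real.exp θ * expInt (k + 1 + 1) θ =
        (k.factorial : ℝ) * Real.exp θ * (((k:ℝ) + 1) * expInt (k + 2) θ) := by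
      push_cast [Nat.factorial_succ]
      ring
    rw [h5, hrec]
    nlinarith [hexp]
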